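/- arXiv:2009.14748 — 5 statements merged into one kernel-verified Lean document; each statement's English description precedes it below -/
import Mathlib

section
/- If a differentiable function S : ℝ → ℝ satisfies S'(t) = -k · S(t)^(n/m) for all t ≥ 0, where k > 0 and m, n are odd coprime integers with 0 < n < m (so x ↦ x^(n/m) is the odd real root power), then S(t) = 0 for all t ≥ (m/(k(m-n))) · S(0)^((m-n)/m) when S(0) ≥ 0. In particular S reaches zero in finite time. -/
/-- Sign-preserving odd real-root power: `oddPow x q = sign x * |x| ^ q`. -/
noncomputable def oddPow (x q : ℝ) : ℝ := Real.sign x * |x| ^ q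

lemma oddPow_pos {x : ℝ} (hx : 0 < x) (q : ℝ) : 0 < oddPow x q := by
  unfold oddPow
  rw [Real.sign_of_pos hx, one_mul]
  exact Real.rpow_pos_of_pos (abs_pos.mpr hx.ne') q

lemma oddPow_neg {x : ℝ} (hx : x < 0) (q : ℝ) : oddPow x q < 0 := by
  unfold oddPow
  rw [Real.sign_of_neg hx]
  have h := Real.rpow_pos_of_pos (abs_pos.mpr hx.ne) q
  nlinarith

lemma oddPow_of_pos {x : ℝ} (hx : 0 < x) (q : ℝ) : oddPow x q = x ^ q := by
  unfold oddPow
  rw [Real.sign_of_pos hx, one_mul, abs_of_pos hx]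

theorem finite_time_convergence
    (S : ℝ → ℝ) (k : ℝ) (m n : ℤ)
    (hk : 0 < k) (hmodd : Odd m) (hnodd : Odd n) (hcop : IsCoprime m n)
    (hn : 0 < n) (hnm : n < m)
    (hdiff : Differentiable ℝ S)
    (hode : ∀ t : ℝ, 0 ≤ t → deriv S t = -k * oddPow (S t) ((n : ℝ) / (m : ℝ)))
    (hS0 : 0 ≤ S 0) :
    ∀ t : ℝ, ((m : ℝ) / (k * ((m : ℝ) - (n : ℝ)))) * (S 0) ^ (((m : ℝ) - (n : ℝ)) / (m : ℝ)) ≤ t →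
      S t = 0 := by
  intro t htT
  have hm0 : (0:ℝ) < (m:ℝ) := by exact_mod_cast hn.trans hnm
  have hmn : (0:ℝ) < (m:ℝ) - (n:ℝ) := by
    have h : (n:ℝ) < (m:ℝ) := by exact_mod_cast hnm
    linarith
  set c : ℝ := ((m:ℝ) - (n:ℝ))/(m:ℝ) with hc_def
  have hc : 0 < c := div_pos hmn hm0
  set T : ℝ := ((m : ℝ) / (k * ((m : ℝ) - (n : ℝ)))) * (S 0) ^ c with hT_def
  have hT0 : 0 ≤ T :=
    mul_nonneg (div_nonneg hm0.le (mul_nonneg hk.le hmn.le)) (Real.rpow_nonneg hS0 c)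
  have hScont : Continuous S := hdiff.continuous
  have hderiv_neg : ∀ s : ℝ, 0 ≤ s → 0 < S s → deriv S s < 0 := by
    intro s hs hpos
    rw [hode s hs]
    have := oddPow_pos hpos ((n:ℝ)/(m:ℝ))
    nlinarith
  have hderiv_pos : ∀ s : ℝ, 0 ≤ s → S s < 0 → 0 < deriv S s := by
    intro s hs hneg
    rw [hode s hs]
    have := oddPow_neg hneg ((n:ℝ)/(m:ℝ))
    nlinarith
  -- once S hits zero it stays zero
  have inv : ∀ t0 : ℝ, 0 ≤ t0 → S t0 = 0 → ∀ t1, t0 ≤ t1 → S t1 = 0 := by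
    intro t0 ht0 hz t1 ht01
    rcases eq_or_lt_of_le ht01 with rfl | hlt
    · exact hz
    by_contra hne
    set Z : Set ℝ := Set.Icc t0 t1 ∩ S ⁻¹' {0} with hZ
    have hZne : Z.Nonempty := ⟨t0, ⟨le_refl _, hlt.le⟩, hz⟩
    have hZcomp : IsCompact Z :=
      (isCompact_Icc).inter_right (isClosed_singleton.preimage hScont)
    have ht2mem := hZcomp.sSup_mem hZne
    set t2 := sSup Z with ht2_def
    obtain ⟨⟨ht02, ht21⟩, ht2z⟩ := ht2mem
    have ht2z : S t2 = 0 := ht2z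
    have ht2lt : t2 < t1 := lt_of_le_of_ne ht21 (fun h => hne (h ▸ ht2z))
    have hnz : ∀ s, t2 < s → s ≤ t1 → S s ≠ 0 := by
      intro s hs hs1 h0
      have hmem : s ∈ Z := ⟨⟨le_trans ht02 hs.le, hs1⟩, h0⟩
      exact absurd (le_csSup hZcomp.bddAbove hmem) (not_le.mpr hs)
    rcases lt_or_gt_of_ne hne with hneg | hpos
    · have hss : ∀ s ∈ Set.Ioo t2 t1, S s < 0 := by
        intro s hs
        rcases lt_trichotomy (S s) 0 with h | h | h
        · exact h
        · exact absurd h (hnz s hs.1 hs.2.le)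
        · obtain ⟨u, hu, hSu⟩ := intermediate_value_Icc' hs.2.le (hScont.continuousOn)
            (Set.mem_Icc.mpr ⟨hneg.le, h.le⟩)
          exact absurd hSu (hnz u (lt_of_lt_of_le hs.1 hu.1) hu.2)
      have hmono : StrictMonoOn S (Set.Icc t2 t1) := by
        apply strictMonoOn_of_deriv_pos (convex_Icc _ _) hScont.continuousOn
        intro s hs
        rw [interior_Icc] at hs
        exact hderiv_pos s (le_trans (le_trans ht0 ht02) hs.1.le) (hss s hs)
      have := hmono (Set.left_mem_Icc.mpr ht2lt.le) (Set.right_mem_Icc.mpr ht2lt.le) ht2lt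
      rw [ht2z] at this
      linarith
    · have hss : ∀ s ∈ Set.Ioo t2 t1, 0 < S s := by
        intro s hs
        rcases lt_trichotomy (S s) 0 with h | h | h
        · obtain ⟨u, hu, hSu⟩ := intermediate_value_Icc hs.2.le (hScont.continuousOn)
            (Set.mem_Icc.mpr ⟨h.le, hpos.le⟩)
          exact absurd hSu (hnz u (lt_of_lt_of_le hs.1 hu.1) hu.2)
        · exact absurd h (hnz s hs.1 hs.2.le)
        · exact h
      have hmono : StrictAntiOn S (Set.Icc t2 t1) := by
        apply strictAntiOn_of_deriv_neg (convex_Icc _ _) hScont.continuousOn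
        intro s hs
        rw [interior_Icc] at hs
        exact hderiv_neg s (le_trans (le_trans ht0 ht02) hs.1.le) (hss s hs)
      have := hmono (Set.left_mem_Icc.mpr ht2lt.le) (Set.right_mem_Icc.mpr ht2lt.le) ht2lt
      rw [ht2z] at this
      linarith
  -- there is a zero in [0, T]
  have hzero : ∃ t0 ∈ Set.Icc (0:ℝ) T, S t0 = 0 := by
    rcases eq_or_lt_of_le hS0 with h0 | h0
    · exact ⟨0, ⟨le_refl _, hT0⟩, h0.symm⟩
    by_contra hcon
    push_neg at hcon
    have hpos : ∀ s ∈ Set.Icc (0:ℝ) T, 0 < S s := by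
      intro s hs
      rcases lt_trichotomy (S s) 0 with h | h | h
      · obtain ⟨u, hu, hSu⟩ := intermediate_value_Icc' hs.1 (hScont.continuousOn)
          (Set.mem_Icc.mpr ⟨h.le, h0.le⟩)
        exact absurd hSu (hcon u ⟨hu.1, le_trans hu.2 hs.2⟩)
      · exact absurd h (hcon s hs)
      · exact h
    set g : ℝ → ℝ := fun s => (S s) ^ c + k * c * s with hg
    have hgderiv : ∀ s ∈ Set.Icc (0:ℝ) T, HasDerivAt g 0 s := by
      intro s hs
      have hSs := hpos s hs
      have h1 : HasDerivAt (fun u => (S u) ^ c) ((c * (S s) ^ (c-1)) * deriv S s) s := by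
        have := (Real.hasDerivAt_rpow_const (p := c) (Or.inl hSs.ne')).comp s (hdiff s).hasDerivAt
        simpa [Function.comp_def] using this
      have h2 : HasDerivAt (fun u : ℝ => k * c * u) (k * c) s := by
        simpa using (hasDerivAt_id s).const_mul (k * c)
      have h3 := h1.add h2
      have hkey : (c * (S s) ^ (c-1)) * deriv S s + k * c = 0 := by
        rw [hode s hs.1, oddPow_of_pos hSs]
        have hpow : (S s) ^ (c-1) * (S s) ^ ((n:ℝ)/(m:ℝ)) = 1 := by
          rw [← Real.rpow_add hSs]
          have hexp : c - 1 + (n:ℝ)/(m:ℝ) = 0 := by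
            rw [hc_def]; field_simp; ring
          rw [hexp, Real.rpow_zero]
        linear_combination (-(k*c)) * hpow
      rw [hkey] at h3
      exact h3
    have hgcont : ContinuousOn g (Set.Icc 0 T) :=
      fun s hs => ((hgderiv s hs).continuousAt).continuousWithinAt
    have hconst := constant_of_has_deriv_right_zero hgcont
      (fun s hs => (hgderiv s (Set.Ico_subset_Icc_self hs)).hasDerivWithinAt)
    have hgT := hconst T (Set.right_mem_Icc.mpr hT0)
    have hSTpos : 0 < S T := hpos T (Set.right_mem_Icc.mpr hT0)
    have hVT : 0 < (S T) ^ c := Real.rpow_pos_of_pos hSTpos c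
    have hkcT : k * c * T = (S 0) ^ c := by
      rw [hT_def, hc_def]
      field_simp
    simp only [hg] at hgT
    linarith
  obtain ⟨t0, ht0mem, ht0z⟩ := hzero
  exact inv t0 ht0mem.1 ht0z t (le_trans ht0mem.2 htT)
end

section
/- Let A be the product of the unit lower-triangular matrix L with rows (1,0,0), (tan θ_des, 1, 0), (0,0,1) and the matrix A_p from the guidance law. Then |det A| = V_p² |cos γ|, so A is invertible iff V_p ≠ 0 and cos γ ≠ 0. -/
theorem guidance_matrix_A_det
    (Vp αp γ ψ θdes : ℝ) (hθ : θdes ∈ Set.Ioo (-(Real.pi / 2)) (Real.pi / 2)) :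
    let Ap : Matrix (Fin 3) (Fin 3) ℝ :=
      !![-(Real.cos (αp - ψ) * Real.cos γ), Vp * Real.sin (αp - ψ) * Real.cos γ,
          Vp * Real.cos (αp - ψ) * Real.sin γ;
         -(Real.sin γ), 0, -(Vp * Real.cos γ);
         -(Real.sin (αp - ψ) * Real.cos γ), -(Vp * Real.cos (αp - ψ) * Real.cos γ),
          Vp * Real.sin (αp - ψ) * Real.sin γ]
    let L : Matrix (Fin 3) (Fin 3) ℝ := !![1, 0, 0; Real.tan θdes, 1, 0; 0, 0, 1]
    let A : Matrix (Fin 3) (Fin 3) ℝ := L * Ap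
    |A.det| = Vp ^ 2 * |Real.cos γ| ∧ (IsUnit A.det ↔ (Vp ≠ 0 ∧ Real.cos γ ≠ 0)) := by
  intro Ap L A
  have h1 := Real.sin_sq_add_cos_sq γ
  have h2 := Real.sin_sq_add_cos_sq (αp - ψ)
  have hA : A.det = Vp ^ 2 * Real.cos γ := by
    show (L * Ap).det = _
    rw [Matrix.det_mul]
    simp [L, Ap, Matrix.det_fin_three]
    linear_combination Vp ^ 2 * Real.cos γ *
      (Real.cos (αp - ψ) ^ 2 * h1 + Real.sin (αp - ψ) ^ 2 * h1 + h2)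
  rw [hA]
  constructor
  · rw [abs_mul, abs_pow, sq_abs]
  · rw [isUnit_iff_ne_zero, mul_ne_zero_iff, pow_ne_zero_iff (by norm_num : 2 ≠ 0)]
end

section
/- Let k_a, k_b ∈ ℝ with k_b > k_a, and θ_des ∈ (-π/2, π/2). Suppose θ : [0,∞) → (-π/2, π/2) is differentiable and satisfies θ'(t) = (k_b - k_a) cos²(θ(t)) (tan(θ_des) - tan(θ(t))). Then with V(t) = ½ (θ(t) - θ_des)², V is non-increasing; moreover V'(t) ≤ 0 with equality only when θ(t) = θ_des, and θ(t) → θ_des as t → ∞. -/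
open Filter

private lemma elev_derivV (θdes : ℝ) (θ : ℝ → ℝ) (hdiff : Differentiable ℝ θ) (t : ℝ) :
    deriv (fun s => (1 / 2 : ℝ) * (θ s - θdes) ^ 2) t = (θ t - θdes) * deriv θ t := by
  have h1 : HasDerivAt (fun s => θ s - θdes) (deriv θ t) t :=
    (hdiff t).hasDerivAt.sub_const θdes
  have h2 : HasDerivAt (fun s => (1 / 2 : ℝ) * (θ s - θdes) ^ 2) _ t := (h1.pow 2).const_mul (1 / 2 : ℝ)
  rw [h2.deriv]
  push_cast
  ring

private lemma elev_key (θdes x : ℝ)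
    (hθdes : θdes ∈ Set.Ioo (-(Real.pi / 2)) (Real.pi / 2))
    (hx : x ∈ Set.Ioo (-(Real.pi / 2)) (Real.pi / 2)) :
    (x - θdes) * (Real.tan θdes - Real.tan x) ≤ 0 ∧
      ((x - θdes) * (Real.tan θdes - Real.tan x) = 0 → x = θdes) := by
  rcases lt_trichotomy x θdes with h | h | h
  · have ht := Real.strictMonoOn_tan hx hθdes h
    constructor
    · nlinarith
    · intro h0; nlinarith
  · simp [h]
  · have ht := Real.strictMonoOn_tan hθdes hx h
    constructor
    · nlinarith
    · intro h0; nlinarith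

private lemma elev_conv_aux (c θdes : ℝ) (hc : 0 < c)
    (hθdes : θdes ∈ Set.Ioo (-(Real.pi / 2)) (Real.pi / 2))
    (θ : ℝ → ℝ)
    (hrange : ∀ t : ℝ, 0 ≤ t → θ t ∈ Set.Ioo (-(Real.pi / 2)) (Real.pi / 2))
    (hdiff : Differentiable ℝ θ)
    (hode : ∀ t : ℝ, 0 ≤ t →
      deriv θ t = c * Real.cos (θ t) ^ 2 * (Real.tan θdes - Real.tan (θ t)))
    (hgt : ∀ t : ℝ, 0 ≤ t → θdes < θ t) :
    Tendsto θ atTop (nhds θdes) := by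
  have hderiv_nonpos : ∀ t : ℝ, 0 ≤ t → deriv θ t ≤ 0 := by
    intro t ht
    rw [hode t ht]
    have h1 : Real.tan θdes < Real.tan (θ t) :=
      Real.strictMonoOn_tan hθdes (hrange t ht) (hgt t ht)
    exact mul_nonpos_of_nonneg_of_nonpos (mul_nonneg hc.le (sq_nonneg _)) (by linarith)
  have hanti : AntitoneOn θ (Set.Ici (0 : ℝ)) := by
    apply antitoneOn_of_deriv_nonpos (convex_Ici 0) hdiff.continuous.continuousOn
      (fun x _ => (hdiff x).differentiableWithinAt)
    intro x hx
    rw [interior_Ici] at hx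
    exact hderiv_nonpos x hx.le
  by_cases hcl : ∀ ε > (0 : ℝ), ∃ t, 0 ≤ t ∧ θ t < θdes + ε
  · rw [Metric.tendsto_atTop]
    intro ε hε
    obtain ⟨t0, ht0, hlt⟩ := hcl ε hε
    refine ⟨t0, fun t ht => ?_⟩
    have ht' : (0 : ℝ) ≤ t := le_trans ht0 ht
    have h1 : θ t ≤ θ t0 := hanti ht0 ht' ht
    have h2 := hgt t ht'
    rw [Real.dist_eq, abs_of_pos (by linarith)]
    linarith
  · exfalso
    push_neg at hcl
    obtain ⟨ε, hε, hbig⟩ := hcl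
    set a := θdes + ε with ha
    have ha0 : a ≤ θ 0 := hbig 0 le_rfl
    have haIoo : a ∈ Set.Ioo (-(Real.pi / 2)) (Real.pi / 2) :=
      ⟨by have := hθdes.1; linarith, lt_of_le_of_lt ha0 (hrange 0 le_rfl).2⟩
    obtain ⟨x, hx, hmin⟩ := isCompact_Icc.exists_isMinOn (Set.nonempty_Icc.2 ha0)
      Real.continuous_cos.continuousOn
    rw [isMinOn_iff] at hmin
    have hm : 0 < Real.cos x :=
      Real.cos_pos_of_mem_Ioo ⟨lt_of_lt_of_le haIoo.1 hx.1,
        lt_of_le_of_lt hx.2 (hrange 0 le_rfl).2⟩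
    have htan : Real.tan θdes < Real.tan a :=
      Real.strictMonoOn_tan hθdes haIoo (by rw [ha]; linarith)
    set K := c * Real.cos x ^ 2 * (Real.tan a - Real.tan θdes) with hK
    have hKpos : 0 < K :=
      mul_pos (mul_pos hc (pow_pos hm 2)) (sub_pos.2 htan)
    have hcont2 : Continuous fun s : ℝ => θ s + K * s :=
      hdiff.continuous.add (continuous_const.mul continuous_id)
    have hdiff2 : Differentiable ℝ fun s : ℝ => θ s + K * s :=
      hdiff.add (differentiable_id.const_mul K)
    have hder : ∀ t : ℝ, 0 ≤ t → deriv (fun s => θ s + K * s) t ≤ 0 := by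
      intro t ht'
      have hmem := hrange t ht'
      have h1 : a ≤ θ t := hbig t ht'
      have h2 : θ t ≤ θ 0 := hanti Set.self_mem_Ici ht' ht'
      have hcos : Real.cos x ≤ Real.cos (θ t) := hmin (θ t) ⟨h1, h2⟩
      have htan2 : Real.tan a ≤ Real.tan (θ t) :=
        Real.strictMonoOn_tan.monotoneOn haIoo hmem h1
      have hcosθ : 0 < Real.cos (θ t) := Real.cos_pos_of_mem_Ioo hmem
      have hd : deriv (fun s => θ s + K * s) t = deriv θ t + K := by
        have h : deriv (fun s => θ s + K * s) t = deriv θ t + K * 1 := ((hdiff t).hasDerivAt.add ((hasDerivAt_id t).const_mul K)).deriv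
        simpa using h
      rw [hd, hode t ht']
      have e1 : Real.cos x ^ 2 ≤ Real.cos (θ t) ^ 2 := by nlinarith
      nlinarith [mul_le_mul_of_nonneg_left e1 hc.le,
        mul_le_mul_of_nonneg_left (sub_le_sub_right htan2 (Real.tan θdes))
          (mul_pos hc (pow_pos hcosθ 2)).le]
    have hanti2 : AntitoneOn (fun s => θ s + K * s) (Set.Ici (0 : ℝ)) := by
      apply antitoneOn_of_deriv_nonpos (convex_Ici 0) hcont2.continuousOn
        (fun y _ => (hdiff2 y).differentiableWithinAt)
      intro y hy
      rw [interior_Ici] at hy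
      exact hder y hy.le
    set T := max 1 ((θ 0 - θdes) / K + 1) with hT
    have hT0 : (0 : ℝ) ≤ T := le_trans zero_le_one (le_max_left _ _)
    have hle : θ T + K * T ≤ θ 0 + K * 0 := hanti2 Set.self_mem_Ici hT0 hT0
    have hTbig : (θ 0 - θdes) / K + 1 ≤ T := le_max_right _ _
    have hKT : θ 0 - θdes + K ≤ K * T := by
      have := mul_le_mul_of_nonneg_left hTbig hKpos.le
      calc θ 0 - θdes + K = K * ((θ 0 - θdes) / K + 1) := by field_simp
        _ ≤ K * T := this
    have := hgt T hT0
    linarith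

theorem elevation_angle_lyapunov
    (ka kb θdes : ℝ) (hab : ka < kb)
    (hθdes : θdes ∈ Set.Ioo (-(Real.pi / 2)) (Real.pi / 2))
    (θ : ℝ → ℝ)
    (hrange : ∀ t : ℝ, 0 ≤ t → θ t ∈ Set.Ioo (-(Real.pi / 2)) (Real.pi / 2))
    (hdiff : Differentiable ℝ θ)
    (hode : ∀ t : ℝ, 0 ≤ t →
      deriv θ t = (kb - ka) * Real.cos (θ t) ^ 2 * (Real.tan θdes - Real.tan (θ t))) :
    (AntitoneOn (fun t => (1 / 2) * (θ t - θdes) ^ 2) (Set.Ici (0 : ℝ))) ∧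
    (∀ t : ℝ, 0 ≤ t →
      deriv (fun s => (1 / 2) * (θ s - θdes) ^ 2) t ≤ 0 ∧
      (deriv (fun s => (1 / 2) * (θ s - θdes) ^ 2) t = 0 → θ t = θdes)) ∧
    Tendsto θ atTop (nhds θdes) := by
  have hc : (0 : ℝ) < kb - ka := sub_pos.2 hab
  -- Part 2
  have part2 : ∀ t : ℝ, 0 ≤ t →
      deriv (fun s => (1 / 2 : ℝ) * (θ s - θdes) ^ 2) t ≤ 0 ∧
      (deriv (fun s => (1 / 2 : ℝ) * (θ s - θdes) ^ 2) t = 0 → θ t = θdes) := by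
    intro t ht
    have hE := elev_derivV θdes θ hdiff t
    have hkey := elev_key θdes (θ t) hθdes (hrange t ht)
    have hcosθ : 0 < Real.cos (θ t) := Real.cos_pos_of_mem_Ioo (hrange t ht)
    rw [hE, hode t ht]
    constructor
    · have hre : (θ t - θdes) * ((kb - ka) * Real.cos (θ t) ^ 2 * (Real.tan θdes - Real.tan (θ t)))
          = (kb - ka) * Real.cos (θ t) ^ 2 * ((θ t - θdes) * (Real.tan θdes - Real.tan (θ t))) := by
        ring
      rw [hre]
      exact mul_nonpos_of_nonneg_of_nonpos (mul_nonneg hc.le (sq_nonneg _)) hkey.1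
    · intro h0
      apply hkey.2
      have hfac : (kb - ka) * Real.cos (θ t) ^ 2 *
          ((θ t - θdes) * (Real.tan θdes - Real.tan (θ t))) = 0 := by linarith [h0]; 
      rcases mul_eq_zero.1 hfac with h | h
      · exact absurd h (ne_of_gt (mul_pos hc (pow_pos hcosθ 2)))
      · exact h
  -- differentiability of V
  have hVdiff : Differentiable ℝ fun s => (1 / 2 : ℝ) * (θ s - θdes) ^ 2 :=
    (((hdiff.sub_const θdes).pow 2).const_mul (1 / 2 : ℝ))
  have part1 : AntitoneOn (fun t => (1 / 2 : ℝ) * (θ t - θdes) ^ 2) (Set.Ici (0 : ℝ)) := by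
    apply antitoneOn_of_deriv_nonpos (convex_Ici 0) hVdiff.continuous.continuousOn
      (fun y _ => (hVdiff y).differentiableWithinAt)
    intro y hy
    rw [interior_Ici] at hy
    exact (part2 y hy.le).1
  refine ⟨part1, part2, ?_⟩
  by_cases hz : ∃ t0, 0 ≤ t0 ∧ θ t0 = θdes
  · obtain ⟨t0, ht0, heq⟩ := hz
    have hev : ∀ t ≥ t0, θ t = θdes := by
      intro t ht
      have ht' : (0 : ℝ) ≤ t := le_trans ht0 ht
      have h1 : (1 / 2 : ℝ) * (θ t - θdes) ^ 2 ≤ (1 / 2 : ℝ) * (θ t0 - θdes) ^ 2 :=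
        part1 ht0 ht' ht
      rw [heq] at h1
      have h2 : (θ t - θdes) ^ 2 ≤ 0 := by nlinarith
      have h3 : (θ t - θdes) ^ 2 = 0 := le_antisymm h2 (sq_nonneg _)
      have := pow_eq_zero_iff (n := 2) (by norm_num) |>.1 h3
      linarith
    have hev' : (fun _ : ℝ => θdes) =ᶠ[atTop] θ := by
      filter_upwards [eventually_ge_atTop t0] with t ht
      exact (hev t ht).symm
    exact Tendsto.congr' hev' tendsto_const_nhds
  · push_neg at hz
    rcases (hz 0 le_rfl).lt_or_gt with h0 | h0
    · -- θ 0 < θdes : θ stays below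
      have hlt : ∀ t : ℝ, 0 ≤ t → θ t < θdes := by
        intro t ht
        by_contra h
        push_neg at h
        have h' : θdes < θ t := lt_of_le_of_ne h (Ne.symm (hz t ht))
        obtain ⟨s, hs, hseq⟩ :=
          intermediate_value_Icc ht hdiff.continuous.continuousOn ⟨h0.le, h'.le⟩
        exact hz s hs.1 hseq
      have hconv := elev_conv_aux (kb - ka) (-θdes) hc
        ⟨by have := hθdes.2; linarith, by have := hθdes.1; linarith⟩
        (fun t => -θ t)
        (fun t ht => ⟨by have := (hrange t ht).2; linarith, by have := (hrange t ht).1; linarith⟩)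
        hdiff.neg
        (fun t ht => by
          have hd : deriv (fun s => -θ s) t = -deriv θ t := by
            exact ((hdiff t).hasDerivAt.neg).deriv
          rw [hd, hode t ht, Real.tan_neg, Real.tan_neg, Real.cos_neg]
          ring)
        (fun t ht => by
          show -θdes < -θ t
          exact neg_lt_neg (hlt t ht))
      have := hconv.neg
      simpa using this
    · have hgt : ∀ t : ℝ, 0 ≤ t → θdes < θ t := by
        intro t ht
        by_contra h
        push_neg at h
        have h' : θ t < θdes := lt_of_le_of_ne h (hz t ht)
        obtain ⟨s, hs, hseq⟩ :=
          intermediate_value_Icc' ht hdiff.continuous.continuousOn ⟨h'.le, h0.le⟩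
        exact hz s hs.1 hseq
      exact elev_conv_aux (kb - ka) θdes hc hθdes θ hrange hdiff hode hgt
end

section
/- Let k_a, k₁ > 0 and let R_xy : [0,∞) → (0,∞) be twice differentiable satisfying R̈_xy(t) = -k_a Ṙ_xy(t) - k₁ · S₁(t)^(n/m), where S₁(t) = Ṙ_xy(t) + k_a R_xy(t), m > n > 0 are odd coprime integers, and x^(n/m) denotes the odd real-root power (sign-preserving). If Ṙ_xy(0) < 0 and S₁(0) < 0 (i.e., |Ṙ_xy(0)| > k_a R_xy(0)), and S₁ satisfies S₁'(t) = -k₁ S₁(t)^(n/m) (so S₁ < 0 and S₁' > 0 during the reaching phase), then |Ṙ_xy(t)| ≤ |Ṙ_xy(0)| for all t during the reaching phase, and hence |Ṙ_xy(t)| ≤ |Ṙ_xy(0)| + k_a R_xy(0). -/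
lemma oddPow_neg_of_neg {x : ℝ} (q : ℝ) (hx : x < 0) : oddPow x q < 0 := by
  unfold oddPow
  rw [Real.sign_of_neg hx]
  have h : (0:ℝ) < |x| ^ q := Real.rpow_pos_of_pos (abs_pos.mpr hx.ne) q
  nlinarith

theorem reaching_phase_speed_bound_case1a
    (ka k1 : ℝ) (m n : ℤ) (hka : 0 < ka) (hk1 : 0 < k1)
    (hmodd : Odd m) (hnodd : Odd n) (hcop : IsCoprime m n)
    (hn : 0 < n) (hnm : n < m)
    (Rxy : ℝ → ℝ) (hpos : ∀ t : ℝ, 0 < Rxy t)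
    (hdiff : Differentiable ℝ Rxy) (hdiff2 : Differentiable ℝ (deriv Rxy))
    (hode : ∀ t : ℝ, 0 ≤ t →
      deriv (deriv Rxy) t
        = -ka * deriv Rxy t - k1 * oddPow (deriv Rxy t + ka * Rxy t) ((n : ℝ) / (m : ℝ)))
    (hR0 : deriv Rxy 0 < 0)
    (hS0 : deriv Rxy 0 + ka * Rxy 0 < 0)
    (hS1ode : ∀ t : ℝ, 0 ≤ t →
      deriv (fun s => deriv Rxy s + ka * Rxy s) t
        = -k1 * oddPow (deriv Rxy t + ka * Rxy t) ((n : ℝ) / (m : ℝ))) :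
    ∀ t : ℝ, 0 ≤ t → deriv Rxy t + ka * Rxy t < 0 →
      |deriv Rxy t| ≤ |deriv Rxy 0| ∧
      |deriv Rxy t| ≤ |deriv Rxy 0| + ka * Rxy 0 := by
  intro t ht hSt
  set S : ℝ → ℝ := fun s => deriv Rxy s + ka * Rxy s with hSdef
  have hSdiff : Differentiable ℝ S := hdiff2.add (hdiff.const_mul ka)
  -- Step 1: S < 0 on [0, t]
  have hSneg : ∀ s ∈ Set.Icc (0:ℝ) t, S s < 0 := by
    by_contra hcon
    push_neg at hcon
    obtain ⟨s, hs, hSs⟩ := hcon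
    set K : Set ℝ := {x ∈ Set.Icc s t | 0 ≤ S x} with hKdef
    have hKne : K.Nonempty := ⟨s, ⟨⟨le_refl s, hs.2⟩, hSs⟩⟩
    have hKcomp : IsCompact K := by
      apply (isCompact_Icc (a := s) (b := t)).inter_right
      exact isClosed_le continuous_const hSdiff.continuous
    have hu := hKcomp.sSup_mem hKne
    set u := sSup K with hudef
    obtain ⟨⟨hsu, hut⟩, hSu⟩ := hu
    have hu0 : (0:ℝ) ≤ u := le_trans hs.1 hsu
    have hult : u < t := by
      rcases lt_or_eq_of_le hut with h | h
      · exact h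
      · exfalso; rw [h] at hSu; exact absurd hSu (not_le.mpr hSt)
    -- On (u, t], S < 0
    have hinterior : ∀ x ∈ Set.Ioo u t, S x < 0 := by
      intro x hx
      by_contra hxc
      push_neg at hxc
      have hxK : x ∈ K := ⟨⟨le_trans hsu hx.1.le, hx.2.le⟩, hxc⟩
      have := le_csSup hKcomp.bddAbove hxK
      exact absurd this (not_le.mpr hx.1)
    have hmono : StrictMonoOn S (Set.Icc u t) := by
      apply strictMonoOn_of_deriv_pos (convex_Icc u t) hSdiff.continuous.continuousOn
      intro x hx
      rw [interior_Icc] at hx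
      have hSx : S x < 0 := hinterior x hx
      have hx0 : (0:ℝ) ≤ x := le_trans hu0 hx.1.le
      rw [hS1ode x hx0]
      have := oddPow_neg_of_neg ((n:ℝ)/(m:ℝ)) hSx
      nlinarith
    have h2 : S u < S t := hmono ⟨le_refl u, hut⟩ ⟨hut, le_refl t⟩ hult
    have h3 : S t < 0 := hSt
    linarith
  -- Step 2: deriv Rxy is monotone on [0, t]
  have hRmono : deriv Rxy 0 ≤ deriv Rxy t := by
    rcases eq_or_lt_of_le ht with h | h
    · rw [← h]
    · have hmono : StrictMonoOn (deriv Rxy) (Set.Icc 0 t) := by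
        apply strictMonoOn_of_deriv_pos (convex_Icc 0 t) hdiff2.continuous.continuousOn
        intro x hx
        rw [interior_Icc] at hx
        have hSx : S x < 0 := hSneg x ⟨hx.1.le, hx.2.le⟩
        have hRx : deriv Rxy x < 0 := by
          have := hpos x
          simp only [hSdef] at hSx
          nlinarith
        rw [hode x hx.1.le]
        have := oddPow_neg_of_neg ((n:ℝ)/(m:ℝ)) hSx
        nlinarith
      exact (hmono ⟨le_refl 0, ht⟩ ⟨ht, le_refl t⟩ h).le
  have hRt : deriv Rxy t < 0 := by
    have := hpos t; nlinarith
  rw [abs_of_neg hRt, abs_of_neg hR0]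
  have := hpos 0
  constructor <;> nlinarith
end

section
/- Let k_a, k_b > 0 with k_b > k_a, θ_des ∈ (-π/2, π/2), and suppose R_xy, R_z : [0,∞) → ℝ satisfy Ṙ_xy = -k_a R_xy and d/dt (R_z + tan(θ_des) R_xy) = -k_b (R_z + tan(θ_des) R_xy), with R_xy(t) > 0 for all t. Define θ(t) = arctan(-R_z(t)/R_xy(t)). Then θ satisfies θ̇ = (k_b - k_a) cos²(θ) (tan(θ_des) - tan(θ)). -/
theorem sliding_mode_elevation_dynamics
    (ka kb θdes : ℝ) (hka : 0 < ka) (hkb : 0 < kb) (hab : ka < kb)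
    (hθdes : θdes ∈ Set.Ioo (-(Real.pi / 2)) (Real.pi / 2))
    (Rxy Rz : ℝ → ℝ)
    (hdRxy : Differentiable ℝ Rxy) (hdRz : Differentiable ℝ Rz)
    (hpos : ∀ t : ℝ, 0 < Rxy t)
    (h1 : ∀ t : ℝ, 0 ≤ t → deriv Rxy t = -ka * Rxy t)
    (h2 : ∀ t : ℝ, 0 ≤ t →
      deriv (fun s => Rz s + Real.tan θdes * Rxy s) t
        = -kb * (Rz t + Real.tan θdes * Rxy t)) :
    ∀ t : ℝ, 0 ≤ t →
      deriv (fun s => Real.arctan (-(Rz s) / Rxy s)) t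
        = (kb - ka) * Real.cos (Real.arctan (-(Rz t) / Rxy t)) ^ 2
            * (Real.tan θdes - Real.tan (Real.arctan (-(Rz t) / Rxy t))) := by
  intro t ht
  set τ := Real.tan θdes with hτ
  have hne : Rxy t ≠ 0 := (hpos t).ne'
  -- deriv Rz
  have hderivRz : deriv Rz t = -kb * (Rz t + τ * Rxy t) + τ * ka * Rxy t := by
    have := h2 t ht
    rw [deriv_fun_add (hdRz t) ((hdRxy t).const_mul τ), deriv_const_mul τ (hdRxy t),
      h1 t ht] at this
    linarith
  -- differentiability of quotient
  have hdq : DifferentiableAt ℝ (fun s => -(Rz s) / Rxy s) t :=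
    ((hdRz t).neg).div (hdRxy t) hne
  -- deriv of quotient
  have hderivq : deriv (fun s => -(Rz s) / Rxy s) t
      = (kb - ka) * (τ - -(Rz t) / Rxy t) := by
    rw [deriv_fun_div (c := fun s => -(Rz s)) ((hdRz t).neg) (hdRxy t) hne, deriv.fun_neg, hderivRz, h1 t ht]
    field_simp
    ring
  -- arctan chain rule
  have hchain : deriv (fun s => Real.arctan (-(Rz s) / Rxy s)) t
      = (1 / (1 + (-(Rz t) / Rxy t) ^ 2)) * deriv (fun s => -(Rz s) / Rxy s) t := by
    have := (Real.hasDerivAt_arctan (-(Rz t) / Rxy t)).comp t hdq.hasDerivAt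
    exact this.deriv
  rw [hchain, hderivq, Real.tan_arctan, Real.cos_sq_arctan]
  ring
end
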